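/- Time-reversal antisymmetry of the Berry curvature: let φ : ℝ² → H be a C² family of unit vectors in a complex Hilbert space and suppose there exists an antiunitary C with C² = Id such that φ(−k) = e^{iθ(k)} C φ(k) for some smooth real phase θ. Then the Berry curvature Ω(k) = ∂₁𝒜₂(k) − ∂₂𝒜₁(k), with 𝒜_j = i⟨φ, ∂_j φ⟩, satisfies Ω(−k) = −Ω(k). -/

import Mathlib

/-- time-reversal antisymmetry of the Berry curvature. If
`φ(-k) = e^{iθ(k)} C φ(k)` for an antiunitary `C` with `C² = Id`, then the Berry
curvature `Ω = ∂₁𝒜₂ - ∂₂𝒜₁` satisfies `Ω(-k) = -Ω(k)`. -/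
theorem berry_curvature_time_reversal_odd
    {H : Type*} [NormedAddCommGroup H] [InnerProductSpace ℂ H]
    (φ : EuclideanSpace ℝ (Fin 2) → H) (hφ : ContDiff ℝ 2 φ)
    (hnorm : ∀ k, (inner ℂ (φ k) (φ k) : ℂ) = 1)
    (C : H → H)
    (hCadd : ∀ x y, C (x + y) = C x + C y)
    (hCsmul : ∀ (c : ℂ) (x : H), C (c • x) = (starRingEnd ℂ c) • C x)
    (hCinner : ∀ x y : H, (inner ℂ (C x) (C y) : ℂ) = inner ℂ y x)
    (hC2 : ∀ x, C (C x) = x)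
    (θ : EuclideanSpace ℝ (Fin 2) → ℝ) (hθ : ContDiff ℝ 2 θ)
    (hrel : ∀ k, φ (-k) = Complex.exp (Complex.I * (θ k : ℂ)) • C (φ k))
    (A : Fin 2 → EuclideanSpace ℝ (Fin 2) → ℂ)
    (hA : ∀ j k, A j k =
      Complex.I * inner ℂ (φ k) (fderiv ℝ φ k (EuclideanSpace.single j 1)))
    (Ω : EuclideanSpace ℝ (Fin 2) → ℂ)
    (hΩ : ∀ k, Ω k = fderiv ℝ (A 1) k (EuclideanSpace.single 0 1) -
      fderiv ℝ (A 0) k (EuclideanSpace.single 1 1)) :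
    ∀ k, Ω (-k) = -Ω k := by
  set e : Fin 2 → EuclideanSpace ℝ (Fin 2) := fun j => EuclideanSpace.single j 1 with he
  -- basic differentiability
  have hφd : Differentiable ℝ φ := hφ.differentiable two_ne_zero
  have hθd : Differentiable ℝ θ := hθ.differentiable two_ne_zero
  -- C is real-linear and continuous
  have hRsmul : ∀ (r : ℝ) (x : H), C (r • x) = r • C x := by
    intro r x
    have h1 : (r : ℂ) • x = r • x := Complex.coe_smul r x
    have h2 : (r : ℂ) • C x = r • C x := Complex.coe_smul r (C x)
    rw [← h1, hCsmul, Complex.conj_ofReal, h2]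
  have hCnorm : ∀ x : H, ‖C x‖ = ‖x‖ := by
    intro x
    have h := hCinner x x
    have h1 : ‖C x‖ ^ 2 = ‖x‖ ^ 2 := by
      rw [← inner_self_eq_norm_sq (𝕜 := ℂ) (C x), ← inner_self_eq_norm_sq (𝕜 := ℂ) x, h]
    nlinarith [norm_nonneg (C x), norm_nonneg x]
  let Clin : H →ₗ[ℝ] H :=
    { toFun := C, map_add' := hCadd, map_smul' := hRsmul }
  let Cl : H →L[ℝ] H := Clin.mkContinuous 1 (fun x => by
    simp only [Clin, LinearMap.coe_mk, AddHom.coe_mk, one_mul]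
    exact (hCnorm x).le)
  have hCl : ∀ x, Cl x = C x := fun _ => rfl
  -- reality of ⟪φ, ∂φ⟫
  have hreal : ∀ (k v : EuclideanSpace ℝ (Fin 2)),
      (inner ℂ (fderiv ℝ φ k v) (φ k) : ℂ) + inner ℂ (φ k) (fderiv ℝ φ k v) = 0 := by
    intro k v
    have hc : HasFDerivAt (fun x => (inner ℂ (φ x) (φ x) : ℂ)) (0 : EuclideanSpace ℝ (Fin 2) →L[ℝ] ℂ) k := by
      have h : (fun x : EuclideanSpace ℝ (Fin 2) => (inner ℂ (φ x) (φ x) : ℂ)) = fun _ => (1 : ℂ) := funext hnorm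
      rw [h]; exact hasFDerivAt_const 1 k
    have hi := (hφd k).hasFDerivAt.inner ℂ (hφd k).hasFDerivAt
    have := hc.unique hi
    have h2 := DFunLike.congr_fun this v
    simp only [ContinuousLinearMap.zero_apply, ContinuousLinearMap.comp_apply,
      ContinuousLinearMap.prod_apply, fderivInnerCLM_apply] at h2
    linear_combination -h2
  -- the phase factor
  set c : EuclideanSpace ℝ (Fin 2) → ℂ := fun x => Complex.exp (Complex.I * (θ x : ℂ)) with hcdef
  have hconj : ∀ x, (starRingEnd ℂ) (c x) * c x = 1 := by
    intro x
    rw [hcdef]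
    simp only
    rw [← Complex.exp_conj, ← Complex.exp_add]
    simp [Complex.conj_ofReal]
  -- key identity: A j (-k) = A j k + θ'_j k
  have key : ∀ (j : Fin 2) (k : EuclideanSpace ℝ (Fin 2)),
      A j (-k) = A j k + ((fderiv ℝ θ k (e j) : ℝ) : ℂ) := by
    intro j k
    have hneg : HasFDerivAt (fun x : EuclideanSpace ℝ (Fin 2) => -x)
        (-(ContinuousLinearMap.id ℝ (EuclideanSpace ℝ (Fin 2)))) k := (hasFDerivAt_id k).neg
    have hψ1 : HasFDerivAt (fun x => φ (-x))
        ((fderiv ℝ φ (-k)).comp (-(ContinuousLinearMap.id ℝ (EuclideanSpace ℝ (Fin 2))))) k :=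
      (hφd (-k)).hasFDerivAt.comp k hneg
    have hth : HasFDerivAt (fun x => ((θ x : ℝ) : ℂ))
        (Complex.ofRealCLM.comp (fderiv ℝ θ k)) k :=
      Complex.ofRealCLM.hasFDerivAt.comp k (hθd k).hasFDerivAt
    have hIth : HasFDerivAt (fun x => Complex.I * ((θ x : ℝ) : ℂ))
        (Complex.I • (Complex.ofRealCLM.comp (fderiv ℝ θ k))) k := hth.const_mul Complex.I
    have hexp : HasFDerivAt c
        (c k • (Complex.I • (Complex.ofRealCLM.comp (fderiv ℝ θ k)))) k := hIth.cexp
    have hCφ : HasFDerivAt (fun x => Cl (φ x)) (Cl.comp (fderiv ℝ φ k)) k :=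
      Cl.hasFDerivAt.comp k (hφd k).hasFDerivAt
    have hψ2' : HasFDerivAt (fun x => c x • Cl (φ x)) _ k := hexp.smul hCφ
    have hfun : (fun x => φ (-x)) = fun x => c x • Cl (φ x) := by
      funext x; rw [hrel x]; rfl
    rw [← hfun] at hψ2'
    have huniq := hψ1.unique hψ2'
    have happ := DFunLike.congr_fun huniq (e j)
    simp only [ContinuousLinearMap.comp_apply, ContinuousLinearMap.neg_apply,
      ContinuousLinearMap.coe_id', id_eq, ContinuousLinearMap.add_apply,
      ContinuousLinearMap.coe_smul', Pi.smul_apply, ContinuousLinearMap.smulRight_apply,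
      Complex.ofRealCLM_apply, map_neg, smul_eq_mul] at happ
    have hF' : (fderiv ℝ φ (-k)) (e j)
        = -(c k • Cl ((fderiv ℝ φ k) (e j))
            + (c k * (Complex.I * ((fderiv ℝ θ k (e j) : ℝ) : ℂ))) • Cl (φ k)) := by
      rw [← happ, neg_neg]
    rw [hA j (-k), hA j k, hrel k, hF']
    have hCleq : ∀ x : H, Cl x = C x := hCl
    simp only [inner_neg_right, inner_add_right, inner_smul_left, inner_smul_right,
      hCleq, hCinner, hnorm]
    have H1 := hconj k
    have H2 := hreal k (e j)
    have H3 := Complex.I_mul_I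
    set a := (starRingEnd ℂ) (c k)
    set b := c k
    set p := (inner ℂ ((fderiv ℝ φ k) (e j)) (φ k) : ℂ)
    set q := (inner ℂ (φ k) ((fderiv ℝ φ k) (e j)) : ℂ)
    set t := ((fderiv ℝ θ k (e j) : ℝ) : ℂ)
    linear_combination (-Complex.I * p - Complex.I * Complex.I * t) * H1
      + (-Complex.I) * H2 + (-t) * H3
  -- differentiability of A j and of the θ-derivative
  have hφC1 : ContDiff ℝ 1 (fderiv ℝ φ) := hφ.fderiv_right (by norm_num)
  have hθC1 : ContDiff ℝ 1 (fderiv ℝ θ) := hθ.fderiv_right (by norm_num)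
  have hGd : ∀ j : Fin 2, Differentiable ℝ (fun x => (fderiv ℝ φ x) (e j)) :=
    fun j => (hφC1.clm_apply contDiff_const).differentiable one_ne_zero
  have hTd : ∀ j : Fin 2, Differentiable ℝ (fun x => (fderiv ℝ θ x) (e j)) :=
    fun j => (hθC1.clm_apply contDiff_const).differentiable one_ne_zero
  have hAd : ∀ j : Fin 2, Differentiable ℝ (A j) := by
    intro j
    have hrepr : A j = fun x => Complex.I * inner ℂ (φ x) ((fderiv ℝ φ x) (e j)) :=
      funext (hA j)
    rw [hrepr]
    exact (hφd.inner ℂ (hGd j)).const_mul Complex.I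
  -- flipping the argument of the derivative of A j
  have flip : ∀ (j : Fin 2) (k : EuclideanSpace ℝ (Fin 2)) (i1 : Fin 2),
      fderiv ℝ (A j) (-k) (e i1)
        = -(fderiv ℝ (A j) k (e i1))
          - ((fderiv ℝ (fun x => fderiv ℝ θ x (e j)) k (e i1) : ℝ) : ℂ) := by
    intro j k i1
    have hneg : HasFDerivAt (fun x : EuclideanSpace ℝ (Fin 2) => -x)
        (-(ContinuousLinearMap.id ℝ (EuclideanSpace ℝ (Fin 2)))) k := (hasFDerivAt_id k).neg
    have h1 : HasFDerivAt (fun x => A j (-x))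
        ((fderiv ℝ (A j) (-k)).comp (-(ContinuousLinearMap.id ℝ (EuclideanSpace ℝ (Fin 2))))) k :=
      (hAd j (-k)).hasFDerivAt.comp k hneg
    have h2' : HasFDerivAt (fun x => A j x + ((fderiv ℝ θ x (e j) : ℝ) : ℂ))
        ((fderiv ℝ (A j) k)
          + Complex.ofRealCLM.comp (fderiv ℝ (fun x => fderiv ℝ θ x (e j)) k)) k :=
      (hAd j k).hasFDerivAt.add
        (Complex.ofRealCLM.hasFDerivAt.comp k (hTd j k).hasFDerivAt)
    have hfun : (fun x => A j (-x)) = fun x => A j x + ((fderiv ℝ θ x (e j) : ℝ) : ℂ) :=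
      funext fun x => key j x
    rw [← hfun] at h2'
    have hthis := DFunLike.congr_fun (h1.unique h2') (e i1)
    simp only [ContinuousLinearMap.comp_apply, ContinuousLinearMap.neg_apply,
      ContinuousLinearMap.coe_id', id_eq, ContinuousLinearMap.add_apply,
      Complex.ofRealCLM_apply, map_neg] at hthis
    linear_combination -hthis
  -- evaluation of the second derivative of θ
  have hθd2 : Differentiable ℝ (fderiv ℝ θ) := hθC1.differentiable one_ne_zero
  have hev : ∀ (k : EuclideanSpace ℝ (Fin 2)) (i1 j : Fin 2),
      fderiv ℝ (fun x => fderiv ℝ θ x (e j)) k (e i1)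
        = (fderiv ℝ (fderiv ℝ θ) k) (e i1) (e j) := by
    intro k i1 j
    have hd : HasFDerivAt (fderiv ℝ θ) (fderiv ℝ (fderiv ℝ θ) k) k := (hθd2 k).hasFDerivAt
    have h := hd.clm_apply (hasFDerivAt_const (e j) k)
    rw [h.fderiv]
    simp
  have hsym : ∀ k : EuclideanSpace ℝ (Fin 2),
      (fderiv ℝ (fderiv ℝ θ) k) (e 0) (e 1) = (fderiv ℝ (fderiv ℝ θ) k) (e 1) (e 0) :=
    fun k => second_derivative_symmetric (fun y => (hθd y).hasFDerivAt)
      ((hθd2 k).hasFDerivAt) (e 0) (e 1)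
  -- conclusion
  intro k
  rw [hΩ (-k), hΩ k]
  have e0 : EuclideanSpace.single (0 : Fin 2) (1 : ℝ) = e 0 := rfl
  have e1 : EuclideanSpace.single (1 : Fin 2) (1 : ℝ) = e 1 := rfl
  rw [e0, e1, flip 1 k 0, flip 0 k 1, hev k 0 1, hev k 1 0, hsym k]
  ring
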